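/- For all real numbers λ, ν, γ with λ > 0, 0 < ν < 1 and 0 < γ ≤ 1/2, one has λ^(1+2γ) / ((1−ν)·λ + ν)² ≤ ν^(2γ−1) · (1−ν)^(−2γ−1). -/

import Mathlib

/-- Scalar bound for the time-discretized R-SVGF: for `λ > 0`, `0 < ν < 1`, `0 < γ ≤ 1/2`,
`λ^(1+2γ) / ((1−ν)·λ + ν)² ≤ ν^(2γ−1) · (1−ν)^(−2γ−1)`. -/
theorem stmt1 (lam ν γ : ℝ) (hlam : 0 < lam) (hν0 : 0 < ν) (hν1 : ν < 1)
    (hγ0 : 0 < γ) (hγ : γ ≤ 1 / 2) :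
    lam ^ (1 + 2 * γ) / ((1 - ν) * lam + ν) ^ 2
      ≤ ν ^ (2 * γ - 1) * (1 - ν) ^ (-(2 * γ) - 1) := by
  have h1ν : (0:ℝ) < 1 - ν := by linarith
  set a : ℝ := (1 - ν) * lam with ha_def
  have ha : 0 < a := mul_pos h1ν hlam
  set p : ℝ := 1 + 2 * γ with hp_def
  have hp1 : (0:ℝ) ≤ p / 2 := by positivity
  have hp2 : (0:ℝ) ≤ (1 - 2 * γ) / 2 := by linarith
  have hsum : p / 2 + (1 - 2 * γ) / 2 = 1 := by simp only [hp_def]; ring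
  -- weighted AM-GM
  have gm : a ^ (p / 2) * ν ^ ((1 - 2 * γ) / 2) ≤ a + ν := by
    calc a ^ (p / 2) * ν ^ ((1 - 2 * γ) / 2)
        ≤ (p / 2) * a + ((1 - 2 * γ) / 2) * ν :=
          Real.geom_mean_le_arith_mean2_weighted hp1 hp2 ha.le hν0.le hsum
      _ ≤ 1 * a + 1 * ν := by
          have h1 : p / 2 ≤ 1 := by simp only [hp_def]; linarith
          have h2 : (1 - 2 * γ) / 2 ≤ 1 := by linarith
          gcongr
      _ = a + ν := by ring
  have gm_pos : 0 < a ^ (p / 2) * ν ^ ((1 - 2 * γ) / 2) := by positivity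
  have hsq : a ^ p * ν ^ (1 - 2 * γ) ≤ (a + ν) ^ 2 := by
    have := mul_le_mul gm gm gm_pos.le (by positivity : (0:ℝ) ≤ a + ν)
    calc a ^ p * ν ^ (1 - 2 * γ)
        = (a ^ (p / 2) * ν ^ ((1 - 2 * γ) / 2)) *
          (a ^ (p / 2) * ν ^ ((1 - 2 * γ) / 2)) := by
          rw [mul_mul_mul_comm, ← Real.rpow_add ha, ← Real.rpow_add hν0]
          ring_nf
      _ ≤ (a + ν) * (a + ν) := this
      _ = (a + ν) ^ 2 := (sq (a + ν)).symm
  have hden_pos : 0 < a ^ p * ν ^ (1 - 2 * γ) := by positivity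
  have step : lam ^ p / (a + ν) ^ 2 ≤ lam ^ p / (a ^ p * ν ^ (1 - 2 * γ)) :=
    div_le_div_of_nonneg_left (by positivity) hden_pos hsq
  refine step.trans_eq ?_
  have e1 : (2 * γ - 1 : ℝ) = -(1 - 2 * γ) := by ring
  have e2 : (-(2 * γ) - 1 : ℝ) = -p := by simp only [hp_def]; ring
  rw [e1, e2, Real.rpow_neg hν0.le, Real.rpow_neg h1ν.le, ha_def,
    Real.mul_rpow h1ν.le hlam.le]
  have hl : (0:ℝ) < lam ^ p := Real.rpow_pos_of_pos hlam _
  have h1 : (0:ℝ) < (1 - ν) ^ p := Real.rpow_pos_of_pos h1ν _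
  have h2 : (0:ℝ) < ν ^ (1 - 2 * γ) := Real.rpow_pos_of_pos hν0 _
  field_simp
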